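/- For any function f on a finite set with n elements and any integer k with k ≥ 4n and k ≥ 77, we have |H_{f,k} − H_{f,∞}| ≤ 4n·log₂(k)/k. -/

import Mathlib

open scoped Classical

/-- `itN f k x y` counts the iterates `j < k` with `f^[j] x = y`. -/
noncomputable def itN {X : Type*} (f : X → X) (k : ℕ) (x y : X) : ℕ :=
  ((Finset.range k).filter (fun j => f^[j] x = y)).card

/-- The (shifted) iteration entropy `H_{f,k}`. -/
noncomputable def itH (X : Type*) [Fintype X] (f : X → X) (k : ℕ) : ℝ :=
  (1 / ((k : ℝ) * (Fintype.card X : ℝ))) *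
    ∑ x : X, ∑ y : X, (itN f k x y : ℝ) * Real.logb 2 ((k : ℝ) / (itN f k x y : ℝ))

/-- The asymptotic iteration entropy `H_{f,∞} = (1/n) ∑_i t_i log₂ c_i`:
each point `x` of a component with cycle length `c` contributes `log₂ c / n`,
and the cycle length of the component of `x` is the minimal period of the
eventually-periodic point `f^[n] x`. -/
noncomputable def itHinf (X : Type*) [Fintype X] (f : X → X) : ℝ :=
  (1 / (Fintype.card X : ℝ)) *
    ∑ x : X, Real.logb 2 (Function.minimalPeriod f (f^[Fintype.card X] x))


lemma count_mod_lb (K c i : ℕ) (hc : 0 < c) (hi : i < c) :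
    K / c ≤ ((Finset.range K).filter (fun m => m % c = i)).card := by
  classical
  have : ∀ l ∈ Finset.range (K / c), i + c * l ∈ (Finset.range K).filter (fun m => m % c = i) := by
    intro l hl
    simp only [Finset.mem_range] at hl
    simp only [Finset.mem_filter, Finset.mem_range]
    constructor
    · calc i + c * l < c + c * l := by omega
        _ = c * (l + 1) := by ring
        _ ≤ c * (K / c) := by exact Nat.mul_le_mul_left c (by omega)
        _ ≤ K := Nat.mul_div_le K c
    · simp [Nat.add_mul_mod_self_left, Nat.mod_eq_of_lt hi]
  calc K / c = (Finset.range (K / c)).card := by simp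
    _ ≤ _ := Finset.card_le_card_of_injOn (fun l => i + c * l) this
        (fun a _ b _ h => Nat.eq_of_mul_eq_mul_left hc (Nat.add_left_cancel h))

lemma count_mod_ub (K c i : ℕ) (hc : 0 < c) (hi : i < c) :
    ((Finset.range K).filter (fun m => m % c = i)).card ≤ K / c + 1 := by
  classical
  have : ∀ m ∈ (Finset.range K).filter (fun m => m % c = i), m / c ∈ Finset.range (K / c + 1) := by
    intro m hm
    simp only [Finset.mem_filter, Finset.mem_range] at hm ⊢
    have h2 := Nat.div_le_div_right (c := c) hm.1.le
    omega
  calc ((Finset.range K).filter (fun m => m % c = i)).card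
      ≤ (Finset.range (K / c + 1)).card := by
        apply Finset.card_le_card_of_injOn (fun m => m / c) this
        intro a ha b hb h
        simp only [Finset.coe_filter, Set.mem_setOf_eq] at ha hb
        have h' : a / c = b / c := h
        have ha2 := Nat.div_add_mod a c
        have hb2 := Nat.div_add_mod b c
        rw [h'] at ha2
        omega
    _ = K / c + 1 := by simp



set_option maxHeartbeats 1000000 in
lemma final_ineq {n t c q k S : ℝ} (hn : 1 ≤ n) (ht0 : 0 ≤ t) (htn : t ≤ n)
    (hc1 : 1 ≤ c) (hcn : c ≤ n) (hk4 : 4 * n ≤ k) (hk77 : 77 ≤ k)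
    (hcq1 : c * q ≤ k - t) (hcq2 : k - t ≤ c * q + c) (hq1 : 1 ≤ q)
    (hS1 : (k - t) * Real.logb 2 q ≤ S) (hS2 : S ≤ (k - t) * Real.logb 2 (q + 1)) :
    |Real.logb 2 k - S / k - Real.logb 2 c| ≤ 4 * n * Real.logb 2 k / k := by
  have hk0 : (0:ℝ) < k := by linarith
  have hn0 : (0:ℝ) < n := by linarith
  have hc0 : (0:ℝ) < c := by linarith
  have hq0 : (0:ℝ) < q := by linarith
  have hkt : 0 ≤ k - t := by linarith
  have hlog2 : (0.6931471803 : ℝ) < Real.log 2 := Real.log_two_gt_d9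
  have hlogk2 : (2:ℝ) ≤ Real.logb 2 k := by
    have h1 : Real.logb 2 (4:ℝ) ≤ Real.logb 2 k :=
      Real.logb_le_logb_of_le (by norm_num) (by norm_num) (by linarith)
    have h4 : Real.logb 2 (4:ℝ) = 2 := by
      rw [show (4:ℝ) = 2 * 2 by norm_num, Real.logb_mul (by norm_num) (by norm_num),
        Real.logb_self_eq_one (by norm_num)]
      norm_num
    linarith
  have hlogq0 : 0 ≤ Real.logb 2 q := Real.logb_nonneg (by norm_num) hq1
  have hlogq1 : 0 ≤ Real.logb 2 (q + 1) := Real.logb_nonneg (by norm_num) (by linarith)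
  have hlogqk : Real.logb 2 q ≤ Real.logb 2 k := by
    apply Real.logb_le_logb_of_le (by norm_num) hq0
    nlinarith
  rw [abs_le]
  constructor
  · -- lower bound
    have h1 : S / k ≤ Real.logb 2 (q + 1) := by
      rw [div_le_iff₀ hk0]
      calc S ≤ (k - t) * Real.logb 2 (q + 1) := hS2
        _ ≤ k * Real.logb 2 (q + 1) := by nlinarith
        _ = Real.logb 2 (q + 1) * k := by ring
    have h2 : Real.logb 2 c + Real.logb 2 (q + 1) = Real.logb 2 (c * (q + 1)) :=
      (Real.logb_mul (by linarith) (by linarith)).symm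
    have h3 : Real.logb 2 (c * (q + 1)) ≤ Real.logb 2 (k + n) := by
      apply Real.logb_le_logb_of_le (by norm_num) (by positivity)
      nlinarith
    have h4 : Real.logb 2 (k + n) - Real.logb 2 k = Real.logb 2 ((k + n) / k) := by
      rw [Real.logb_div (by linarith) (by linarith)]
    have h5 : Real.logb 2 ((k + n) / k) ≤ 2 * n / k := by
      have hx : Real.log ((k + n) / k) ≤ n / k := by
        have hy := Real.log_le_sub_one_of_pos (show (0:ℝ) < (k+n)/k by positivity)
        have he : (k + n) / k - 1 = n / k := by field_simp; ring
        linarith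
      rw [Real.logb, div_le_iff₀ (by linarith : (0:ℝ) < Real.log 2)]
      have hnk : (0:ℝ) ≤ n / k := by positivity
      calc Real.log ((k + n) / k) ≤ n / k := hx
        _ = (n / k) * 1 := by ring
        _ ≤ (n / k) * (2 * Real.log 2) :=
            mul_le_mul_of_nonneg_left (by linarith) hnk
        _ = 2 * n / k * Real.log 2 := by ring
    have h6 : 2 * n / k ≤ 4 * n * Real.logb 2 k / k := by
      have h7 : 2 * n ≤ 4 * n * Real.logb 2 k := by
        nlinarith [mul_le_mul_of_nonneg_left hlogk2 hn0.le]
      have e : 2 * n / k = (2 * n) / k := by ring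
      rw [e]
      gcongr
    linarith
  · -- upper bound
    have h1 : Real.logb 2 q - (t / k) * Real.logb 2 q ≤ S / k := by
      rw [le_div_iff₀ hk0]
      have he : (Real.logb 2 q - t / k * Real.logb 2 q) * k = (k - t) * Real.logb 2 q := by
        field_simp
      rw [he]
      exact hS1
    have h2 : Real.logb 2 k - Real.logb 2 c - Real.logb 2 q = Real.logb 2 (k / (c * q)) := by
      rw [Real.logb_div (by linarith) (by positivity), Real.logb_mul (by linarith) (by linarith)]
      ring
    have hcqlb : k - 2 * n ≤ c * q := by nlinarith
    have hk2n : (0:ℝ) < k - 2*n := by linarith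
    have h3 : Real.logb 2 (k / (c * q)) ≤ Real.logb 2 (k / (k - 2*n)) := by
      apply Real.logb_le_logb_of_le (by norm_num) (by positivity)
      apply div_le_div_of_nonneg_left (by linarith) hk2n hcqlb
    have h4 : Real.logb 2 (k / (k - 2*n)) ≤ 6 * n / k := by
      have hx : Real.log (k / (k - 2*n)) ≤ 2 * n / (k - 2*n) := by
        have hy := Real.log_le_sub_one_of_pos (show (0:ℝ) < k/(k-2*n) by positivity)
        have he : k / (k - 2*n) - 1 = 2 * n / (k - 2*n) := by
          field_simp
          ring
        linarith
      have hx2 : 2 * n / (k - 2*n) ≤ 4 * n / k := by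
        rw [div_le_div_iff₀ hk2n hk0]
        linarith [mul_le_mul_of_nonneg_left hk4 hn0.le]
      rw [Real.logb, div_le_iff₀ (by linarith : (0:ℝ) < Real.log 2)]
      have hz : (0:ℝ) ≤ n / k := by positivity
      have h9 : 4 * (n / k) ≤ 6 * (n / k) * Real.log 2 := by
        linarith [mul_le_mul_of_nonneg_left (show (4:ℝ) ≤ 6 * Real.log 2 by linarith) hz]
      have e4 : 4 * n / k = 4 * (n / k) := by ring
      have e6 : 6 * n / k * Real.log 2 = 6 * (n / k) * Real.log 2 := by ring
      linarith [hx.trans hx2]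
    have h5 : (t / k) * Real.logb 2 q ≤ n / k * Real.logb 2 k := by
      have htk : t / k ≤ n / k := by gcongr
      exact mul_le_mul htk hlogqk hlogq0 (by positivity)
    have h6 : 6 * n / k + n / k * Real.logb 2 k ≤ 4 * n * Real.logb 2 k / k := by
      have e : 6 * n / k + n / k * Real.logb 2 k = (6 * n + n * Real.logb 2 k) / k := by ring
      have h7 : 6 * n + n * Real.logb 2 k ≤ 4 * n * Real.logb 2 k := by
        linarith [mul_le_mul_of_nonneg_left hlogk2 hn0.le]
      rw [e]
      gcongr
    linarith

open Function in
set_option maxHeartbeats 1000000 in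
lemma perpoint {X : Type*} [Fintype X] (f : X → X) (x : X) (k : ℕ)
    (hk4n : 4 * Fintype.card X ≤ k) (hk77 : 77 ≤ k) (hn : 0 < Fintype.card X) :
    |(∑ y : X, (itN f k x y : ℝ) * Real.logb 2 ((k : ℝ) / (itN f k x y : ℝ))) / k
      - Real.logb 2 (Function.minimalPeriod f (f^[Fintype.card X] x))|
      ≤ 4 * (Fintype.card X : ℝ) * Real.logb 2 k / k := by
  classical
  set n := Fintype.card X with hndef
  -- pigeonhole: some iterate is a periodic point
  have hex0 : ∃ j, j ≤ n ∧ f^[j] x ∈ periodicPts f := by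
    obtain ⟨a, ha, b, hb, hab, heq⟩ :=
      Finset.exists_ne_map_eq_of_card_lt_of_maps_to
        (s := Finset.range (n + 1)) (t := (Finset.univ : Finset X))
        (by simp [hndef]) (fun j _ => Finset.mem_univ (f^[j] x))
    simp only [Finset.mem_range] at ha hb
    rcases hab.lt_or_gt with h | h
    · exact ⟨a, by omega, mk_mem_periodicPts (by omega : 0 < b - a)
        (show f^[b - a] (f^[a] x) = f^[a] x by
          rw [← Function.iterate_add_apply, Nat.sub_add_cancel h.le]; exact heq.symm)⟩
    · exact ⟨b, by omega, mk_mem_periodicPts (by omega : 0 < a - b)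
        (show f^[a - b] (f^[b] x) = f^[b] x by
          rw [← Function.iterate_add_apply, Nat.sub_add_cancel h.le]; exact heq)⟩
  have hex : ∃ j, f^[j] x ∈ periodicPts f := ⟨hex0.choose, hex0.choose_spec.2⟩
  set t := Nat.find hex with htdef
  have ht : f^[t] x ∈ periodicPts f := Nat.find_spec hex
  have htmin : ∀ j < t, f^[j] x ∉ periodicPts f := fun j hj => Nat.find_min hex hj
  have htn : t ≤ n := (Nat.find_min' hex hex0.choose_spec.2).trans hex0.choose_spec.1
  set c := Function.minimalPeriod f (f^[t] x) with hcdef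
  have hc0 : 0 < c := minimalPeriod_pos_of_mem_periodicPts ht
  -- key: coincidences only after time t
  have haux : ∀ a b : ℕ, a < b → f^[a] x = f^[b] x → t ≤ a := by
    intro a b hab heq
    by_contra hlt
    push_neg at hlt
    exact htmin a hlt (mk_mem_periodicPts (by omega : 0 < b - a)
      (show f^[b - a] (f^[a] x) = f^[a] x by
        rw [← Function.iterate_add_apply, Nat.sub_add_cancel hab.le]; exact heq.symm))
  -- periodicity of the cycle part
  have hcyc : ∀ m : ℕ, f^[t + m] x = f^[t + m % c] x := by
    intro m
    rw [add_comm t m, add_comm t (m % c), Function.iterate_add_apply,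
      Function.iterate_add_apply]
    exact (Function.iterate_mod_minimalPeriod_eq).symm
  -- injectivity on the cycle
  have hcinj : ∀ i < c, ∀ j < c, f^[t + i] x = f^[t + j] x → i = j := by
    intro i hi j hj hij
    have h1 : f^[i] (f^[t] x) = f^[j] (f^[t] x) := by
      rw [← Function.iterate_add_apply, ← Function.iterate_add_apply, add_comm i t,
        add_comm j t]
      exact hij
    exact Function.iterate_injOn_Iio_minimalPeriod (f := f) (x := f^[t] x)
      (Set.mem_Iio.mpr hi) (Set.mem_Iio.mpr hj) h1
  have hcn : c ≤ n := by
    have h1 : (Finset.range c).card ≤ (Finset.univ : Finset X).card := by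
      apply Finset.card_le_card_of_injOn (fun i => f^[t + i] x)
        (fun i _ => Finset.mem_univ _)
      intro i hi j hj hij
      simp only [Finset.coe_range, Set.mem_Iio] at hi hj
      exact hcinj i hi j hj hij
    simpa [hndef] using h1
  have hmp : Function.minimalPeriod f (f^[n] x) = c := by
    have h1 : f^[n] x = f^[n - t] (f^[t] x) := by
      rw [← Function.iterate_add_apply, Nat.sub_add_cancel htn]
    rw [h1, Function.minimalPeriod_apply_iterate ht]
  have htk : t ≤ k := by omega
  have htck : t + c ≤ k := by omega
  set N := fun y => itN f k x y with hNdef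
  set Tail := (Finset.range t).image (fun j => f^[j] x) with hTaildef
  set Cyc := (Finset.range c).image (fun i => f^[t + i] x) with hCycdef
  have hTailcard : Tail.card = t := by
    rw [hTaildef, Finset.card_image_of_injOn, Finset.card_range]
    intro a ha b hb hab
    simp only [Finset.coe_range, Set.mem_Iio] at ha hb
    by_contra hne
    rcases Nat.lt_or_ge a b with h | h
    · exact absurd (haux a b h hab) (by omega)
    · have h' : b < a := by omega
      exact absurd (haux b a h' hab.symm) (by omega)
  have hCcard : Cyc.card = c := by
    rw [hCycdef, Finset.card_image_of_injOn, Finset.card_range]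
    intro a ha b hb hab
    simp only [Finset.coe_range, Set.mem_Iio] at ha hb
    exact hcinj a ha b hb hab
  have hdisj : Disjoint Tail Cyc := by
    rw [Finset.disjoint_left]
    rintro y hyT hyC
    rw [hTaildef, Finset.mem_image] at hyT
    rw [hCycdef, Finset.mem_image] at hyC
    obtain ⟨a, ha, rfl⟩ := hyT
    obtain ⟨i, hi, heq⟩ := hyC
    simp only [Finset.mem_range] at ha hi
    have : t ≤ a := haux a (t + i) (by omega) heq.symm
    omega
  -- value of N on the tail
  have hNtail : ∀ y ∈ Tail, N y = 1 := by
    intro y hy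
    rw [hTaildef, Finset.mem_image] at hy
    obtain ⟨j0, hj0, rfl⟩ := hy
    simp only [Finset.mem_range] at hj0
    have : (Finset.range k).filter (fun j => f^[j] x = f^[j0] x) = {j0} := by
      ext j
      simp only [Finset.mem_filter, Finset.mem_range, Finset.mem_singleton]
      constructor
      · rintro ⟨hjk, hj⟩
        rcases lt_trichotomy j j0 with h | h | h
        · exact absurd (haux j j0 h hj) (by omega)
        · exact h
        · exact absurd (haux j0 j h hj.symm) (by omega)
      · rintro rfl
        exact ⟨by omega, rfl⟩
    rw [hNdef]
    show ((Finset.range k).filter (fun j => f^[j] x = f^[j0] x)).card = 1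
    rw [this, Finset.card_singleton]
  -- value of N on the cycle
  have hNcyc : ∀ y ∈ Cyc, (k - t) / c ≤ N y ∧ N y ≤ (k - t) / c + 1 := by
    intro y hy
    rw [hCycdef, Finset.mem_image] at hy
    obtain ⟨i, hi, rfl⟩ := hy
    simp only [Finset.mem_range] at hi
    have hcard : N (f^[t + i] x) =
        ((Finset.range (k - t)).filter (fun m => m % c = i)).card := by
      rw [hNdef]
      show ((Finset.range k).filter (fun j => f^[j] x = f^[t + i] x)).card = _
      symm
      apply Finset.card_bij (fun m _ => m + t)
      · intro m hm
        simp only [Finset.mem_filter, Finset.mem_range] at hm ⊢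
        refine ⟨by omega, ?_⟩
        rw [add_comm m t, hcyc m, hm.2]
      · intro a ha b hb hab
        omega
      · intro j hj
        simp only [Finset.mem_filter, Finset.mem_range] at hj
        obtain ⟨hjk, hjeq⟩ := hj
        have htj : t ≤ j := by
          by_contra hjt
          push_neg at hjt
          exact absurd (haux j (t + i) (by omega) hjeq) (by omega)
        refine ⟨j - t, ?_, by omega⟩
        simp only [Finset.mem_filter, Finset.mem_range]
        refine ⟨by omega, ?_⟩
        have h2 : f^[t + (j - t)] x = f^[t + i] x := by
          rw [show t + (j - t) = j by omega]
          exact hjeq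
        exact hcinj ((j - t) % c) (Nat.mod_lt _ hc0) i hi ((hcyc (j - t)).symm.trans h2)
    constructor
    · rw [hcard]; exact count_mod_lb (k - t) c i hc0 hi
    · rw [hcard]; exact count_mod_ub (k - t) c i hc0 hi
  -- N vanishes off the orbit
  have hN0 : ∀ y, y ∉ Tail → y ∉ Cyc → N y = 0 := by
    intro y hyT hyC
    rw [hNdef]
    show ((Finset.range k).filter (fun j => f^[j] x = y)).card = 0
    rw [Finset.card_eq_zero, Finset.filter_eq_empty_iff]
    intro j hj
    simp only [Finset.mem_range] at hj
    intro hjeq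
    rcases Nat.lt_or_ge j t with h | h
    · exact hyT (by rw [hTaildef, Finset.mem_image]
                    exact ⟨j, Finset.mem_range.mpr h, hjeq⟩)
    · apply hyC
      rw [hCycdef, Finset.mem_image]
      refine ⟨(j - t) % c, Finset.mem_range.mpr (Nat.mod_lt _ hc0), ?_⟩
      rw [← hcyc (j - t), show t + (j - t) = j by omega, hjeq]
  -- total count
  have hsum : ∑ y : X, N y = k := by
    have h1 := Finset.card_eq_sum_card_fiberwise
      (s := Finset.range k) (t := (Finset.univ : Finset X)) (f := fun j => f^[j] x)
      (fun j _ => Finset.mem_univ _)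
    rw [Finset.card_range] at h1
    rw [hNdef]
    simp only [itN]
    exact h1.symm
  have hsumTail : ∑ y ∈ Tail, N y = t := by
    rw [Finset.sum_congr rfl hNtail, Finset.sum_const, hTailcard, smul_eq_mul, mul_one]
  have hsumCyc : ∑ y ∈ Cyc, N y = k - t := by
    have h1 : ∑ y ∈ Tail ∪ Cyc, N y = k := by
      rw [← hsum]
      apply Finset.sum_subset (Finset.subset_univ _)
      intro y _ hy
      simp only [Finset.mem_union, not_or] at hy
      exact hN0 y hy.1 hy.2
    rw [Finset.sum_union hdisj, hsumTail] at h1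
    omega
  set q := (k - t) / c with hqdef
  have hq1 : 1 ≤ q := (Nat.one_le_div_iff hc0).mpr (by omega)
  have hcq1 : c * q ≤ k - t := by
    rw [hqdef, mul_comm]
    exact Nat.div_mul_le_self _ _
  have hcq2 : k - t ≤ c * q + c := by
    show k - t ≤ c * ((k - t) / c) + c
    have h1 := Nat.div_add_mod (k - t) c
    have h2 := Nat.mod_lt (k - t) hc0
    omega
  -- real casts and positivity
  have hk0 : (0 : ℝ) < k := by positivity
  have hq0' : (1:ℝ) ≤ (q:ℝ) := by exact_mod_cast hq1
  have hNpos : ∀ y ∈ Cyc, 1 ≤ N y := fun y hy => le_trans hq1 (hNcyc y hy).1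
  have hsumC' : ∑ y ∈ Cyc, (N y : ℝ) = (k:ℝ) - t := by
    rw [← Nat.cast_sum, hsumCyc, Nat.cast_sub htk]
  set S : ℝ := ∑ y ∈ Cyc, (N y : ℝ) * Real.logb 2 (N y) with hSdef
  have hS1 : ((k:ℝ) - t) * Real.logb 2 q ≤ S := by
    have h1 : ∀ y ∈ Cyc, (N y : ℝ) * Real.logb 2 q ≤ (N y : ℝ) * Real.logb 2 (N y) := by
      intro y hy
      apply mul_le_mul_of_nonneg_left _ (Nat.cast_nonneg _)
      apply Real.logb_le_logb_of_le (by norm_num) (by linarith)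
      exact_mod_cast (hNcyc y hy).1
    calc ((k:ℝ) - t) * Real.logb 2 q = ∑ y ∈ Cyc, (N y : ℝ) * Real.logb 2 q := by
          rw [← Finset.sum_mul, hsumC']
      _ ≤ S := Finset.sum_le_sum h1
  have hS2 : S ≤ ((k:ℝ) - t) * Real.logb 2 ((q:ℝ) + 1) := by
    have h1 : ∀ y ∈ Cyc, (N y : ℝ) * Real.logb 2 (N y) ≤ (N y : ℝ) * Real.logb 2 ((q:ℝ) + 1) := by
      intro y hy
      apply mul_le_mul_of_nonneg_left _ (Nat.cast_nonneg _)
      apply Real.logb_le_logb_of_le (by norm_num)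
        (by exact_mod_cast hNpos y hy : (0:ℝ) < (N y : ℝ))
      exact_mod_cast (hNcyc y hy).2
    calc S ≤ ∑ y ∈ Cyc, (N y : ℝ) * Real.logb 2 ((q:ℝ) + 1) := Finset.sum_le_sum h1
      _ = ((k:ℝ) - t) * Real.logb 2 ((q:ℝ) + 1) := by rw [← Finset.sum_mul, hsumC']
  have hI : ∑ y : X, (N y : ℝ) * Real.logb 2 ((k:ℝ) / (N y : ℝ))
      = (k:ℝ) * Real.logb 2 k - S := by
    have hA : ∑ y : X, (N y : ℝ) * Real.logb 2 ((k:ℝ) / (N y : ℝ))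
        = ∑ y ∈ Tail ∪ Cyc, (N y : ℝ) * Real.logb 2 ((k:ℝ) / (N y : ℝ)) := by
      symm
      apply Finset.sum_subset (Finset.subset_univ _)
      intro y _ hy
      simp only [Finset.mem_union, not_or] at hy
      rw [hN0 y hy.1 hy.2]
      simp
    have hT : ∑ y ∈ Tail, (N y : ℝ) * Real.logb 2 ((k:ℝ) / (N y : ℝ))
        = (t:ℝ) * Real.logb 2 k := by
      have h2 : ∀ y ∈ Tail, (N y : ℝ) * Real.logb 2 ((k:ℝ) / (N y : ℝ)) = Real.logb 2 k := by
        intro y hy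
        rw [hNtail y hy]
        norm_num
      rw [Finset.sum_congr rfl h2, Finset.sum_const, hTailcard, nsmul_eq_mul]
    have hC : ∑ y ∈ Cyc, (N y : ℝ) * Real.logb 2 ((k:ℝ) / (N y : ℝ))
        = ((k:ℝ) - t) * Real.logb 2 k - S := by
      have hterm : ∀ y ∈ Cyc, (N y : ℝ) * Real.logb 2 ((k:ℝ) / (N y : ℝ))
          = (N y : ℝ) * Real.logb 2 k - (N y : ℝ) * Real.logb 2 (N y) := by
        intro y hy
        rw [Real.logb_div (by positivity) (by exact_mod_cast Nat.one_le_iff_ne_zero.mp (hNpos y hy))]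
        ring
      rw [Finset.sum_congr rfl hterm, Finset.sum_sub_distrib, ← Finset.sum_mul, hsumC']
    rw [hA, Finset.sum_union hdisj, hT, hC]
    ring
  rw [hmp, hI]
  have hdiv : ((k:ℝ) * Real.logb 2 k - S) / k = Real.logb 2 k - S / k := by
    field_simp
  rw [hdiv]
  apply final_ineq (n := (n:ℝ)) (t := (t:ℝ)) (q := (q:ℝ))
  · exact_mod_cast hn
  · positivity
  · exact_mod_cast htn
  · exact_mod_cast hc0
  · exact_mod_cast hcn
  · exact_mod_cast hk4n
  · exact_mod_cast hk77
  · have := hcq1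
    have h' : ((c * q : ℕ) : ℝ) ≤ ((k - t : ℕ) : ℝ) := by exact_mod_cast this
    rwa [Nat.cast_mul, Nat.cast_sub htk] at h'
  · have := hcq2
    have h' : ((k - t : ℕ) : ℝ) ≤ ((c * q + c : ℕ) : ℝ) := by exact_mod_cast this
    rwa [Nat.cast_add, Nat.cast_mul, Nat.cast_sub htk] at h'
  · exact hq0'
  · exact hS1
  · exact hS2


theorem itH_close_to_itHinf {X : Type*} [Fintype X] (f : X → X) (k : ℕ)
    (hk4n : 4 * Fintype.card X ≤ k) (hk77 : 77 ≤ k) :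
    |itH X f k - itHinf X f| ≤ 4 * (Fintype.card X : ℝ) * Real.logb 2 k / k := by
  classical
  rcases Nat.eq_zero_or_pos (Fintype.card X) with h0 | hn
  · have hempty : IsEmpty X := Fintype.card_eq_zero_iff.mp h0
    simp [itH, itHinf, h0]
  · have hk0 : (0:ℝ) < k := by
      have h77 : (0:ℕ) < k := by omega
      exact_mod_cast h77
    have hn0 : (0:ℝ) < (Fintype.card X : ℝ) := by exact_mod_cast hn
    have key : ∀ x : X,
        |(∑ y : X, (itN f k x y : ℝ) * Real.logb 2 ((k : ℝ) / (itN f k x y : ℝ))) / k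
          - Real.logb 2 (Function.minimalPeriod f (f^[Fintype.card X] x))|
          ≤ 4 * (Fintype.card X : ℝ) * Real.logb 2 k / k :=
      fun x => perpoint f x k hk4n hk77 hn
    have e : itH X f k - itHinf X f
        = (1 / (Fintype.card X : ℝ)) * ∑ x : X,
            ((∑ y : X, (itN f k x y : ℝ) * Real.logb 2 ((k : ℝ) / (itN f k x y : ℝ))) / k
              - Real.logb 2 (Function.minimalPeriod f (f^[Fintype.card X] x))) := by
      simp only [itH, itHinf]
      rw [Finset.sum_sub_distrib, ← Finset.sum_div]
      ring
    rw [e, abs_mul, abs_of_nonneg (by positivity : (0:ℝ) ≤ 1 / (Fintype.card X : ℝ))]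
    have h2 := Finset.abs_sum_le_sum_abs
      (fun x : X => (∑ y : X, (itN f k x y : ℝ) * Real.logb 2 ((k : ℝ) / (itN f k x y : ℝ))) / k
        - Real.logb 2 (Function.minimalPeriod f (f^[Fintype.card X] x))) Finset.univ
    have h3 : ∑ x : X,
        |(∑ y : X, (itN f k x y : ℝ) * Real.logb 2 ((k : ℝ) / (itN f k x y : ℝ))) / k
          - Real.logb 2 (Function.minimalPeriod f (f^[Fintype.card X] x))|
        ≤ (Fintype.card X : ℝ) * (4 * (Fintype.card X : ℝ) * Real.logb 2 k / k) := by
      calc _ ≤ ∑ _x : X, 4 * (Fintype.card X : ℝ) * Real.logb 2 k / k :=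
            Finset.sum_le_sum (fun x _ => key x)
        _ = (Fintype.card X : ℝ) * (4 * (Fintype.card X : ℝ) * Real.logb 2 k / k) := by
            rw [Finset.sum_const, Finset.card_univ, nsmul_eq_mul]
    calc 1 / (Fintype.card X : ℝ) * |∑ x : X, _|
        ≤ 1 / (Fintype.card X : ℝ)
            * ((Fintype.card X : ℝ) * (4 * (Fintype.card X : ℝ) * Real.logb 2 k / k)) := by
          apply mul_le_mul_of_nonneg_left (h2.trans h3) (by positivity)
      _ = 4 * (Fintype.card X : ℝ) * Real.logb 2 k / k := by
          field_simp
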